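/- Let P and Q be Borel probability measures on ℝ and let the cost function ψ̃ : ℝ × ℝ → [0,∞) be continuous and quasi-antitone. Then for every probability measure π on ℝ × ℝ whose first marginal is P and whose second marginal is Q, ∫_{ℝ×ℝ} ψ̃ dπ ≥ ∫_{(0,1)} ψ̃(F_P^←(x), F_Q^←(x)) dλ_L(x), where λ_L is Lebesgue measure on (0,1). -/

import Mathlib

open Set MeasureTheory
open scoped ENNReal

/-- The quantile function `F_P^←(x) := inf{z ∈ ℝ : F_P(z) ≥ x}` of a Borel
probability measure `P` on `ℝ`, where `F_P(z) := P((−∞,z])`. -/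
noncomputable def quantileFn (P : Measure ℝ) (x : ℝ) : ℝ :=
  sInf {z : ℝ | x ≤ (P (Set.Iic z)).toReal}

namespace CLB
open Real Filter Topology

noncomputable def F (P : Measure ℝ) (z : ℝ) : ℝ := (P (Set.Iic z)).toReal

variable {P : Measure ℝ} [IsProbabilityMeasure P]

lemma F_mono : Monotone (F P) := fun a b hab =>
  ENNReal.toReal_mono (measure_ne_top _ _) (measure_mono (Iic_subset_Iic.2 hab))

lemma F_nonneg (z : ℝ) : 0 ≤ F P z := ENNReal.toReal_nonneg

lemma F_tendsto_one : Tendsto (F P) atTop (𝓝 1) := by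
  have h := tendsto_measure_Iic_atTop (μ := P)
  rw [measure_univ] at h
  have := (ENNReal.tendsto_toReal (by simp : (1:ℝ≥0∞) ≠ ⊤)).comp h
  unfold F; simpa [F, Function.comp_def] using this

lemma qSet_nonempty {x : ℝ} (hx : x < 1) : ∃ z, x ≤ F P z := by
  have := (F_tendsto_one (P := P)).eventually (eventually_ge_nhds hx)
  exact this.exists

lemma qSet_bddBelow {x : ℝ} (hx : 0 < x) : BddBelow {z : ℝ | x ≤ F P z} := by
  have h : Tendsto (fun n : ℕ => P (Iic (-(n:ℝ)))) atTop (𝓝 (P (⋂ n : ℕ, Iic (-(n:ℝ))))) := by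
    refine tendsto_measure_iInter_atTop (fun n => (measurableSet_Iic).nullMeasurableSet)
      (fun a b hab => Iic_subset_Iic.2 (by simp; exact_mod_cast hab)) ⟨0, measure_ne_top _ _⟩
  have hempty : (⋂ n : ℕ, Iic (-(n:ℝ))) = ∅ := by
    ext z; simp only [mem_iInter, mem_Iic, mem_empty_iff_false, iff_false, not_forall]
    obtain ⟨n, hn⟩ := exists_nat_gt (-z)
    exact ⟨n, by push_neg; linarith⟩
  rw [hempty, measure_empty] at h
  have h2 : Tendsto (fun n : ℕ => F P (-(n:ℝ))) atTop (𝓝 0) := by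
    have := (ENNReal.tendsto_toReal (by simp : (0:ℝ≥0∞) ≠ ⊤)).comp h
    simpa [F, Function.comp_def] using this
  obtain ⟨n, hn⟩ := (h2.eventually (eventually_lt_nhds hx)).exists
  refine ⟨-(n:ℝ), fun z hz => ?_⟩
  by_contra hlt
  push_neg at hlt
  exact absurd (le_trans hz (F_mono hlt.le)) (not_le.2 hn)

lemma F_quantile {x : ℝ} (hx0 : 0 < x) (hx1 : x < 1) : x ≤ F P (quantileFn P x) := by
  set m := quantileFn P x with hm
  have hne : {z : ℝ | x ≤ F P z}.Nonempty := qSet_nonempty hx1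
  have hbdd := qSet_bddBelow (P := P) hx0
  -- right continuity
  have hseq : Tendsto (fun n : ℕ => P (Iic (m + 1/(n+1)))) atTop (𝓝 (P (Iic m))) := by
    have hi : (⋂ n : ℕ, Iic (m + 1/((n:ℝ)+1))) = Iic m := by
      ext z
      simp only [mem_iInter, mem_Iic]
      constructor
      · intro h
        by_contra hz
        push_neg at hz
        obtain ⟨n, hn⟩ := exists_nat_one_div_lt (by linarith : 0 < z - m)
        have h2 := h n
        rw [one_div] at h2
        rw [one_div] at hn
        linarith
      · intro h n
        have : (0:ℝ) < 1/((n:ℝ)+1) := by positivity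
        linarith
    have := tendsto_measure_iInter_atTop (μ := P)
      (s := fun n : ℕ => Iic (m + 1/((n:ℝ)+1)))
      (fun n => measurableSet_Iic.nullMeasurableSet)
      (fun a b hab => Iic_subset_Iic.2 (by
        have : ((a:ℝ)+1) ≤ ((b:ℝ)+1) := by exact_mod_cast add_le_add_left (Nat.cast_le.2 hab) 1
        have ha : (0:ℝ) < (a:ℝ)+1 := by positivity
        gcongr))
      ⟨0, measure_ne_top _ _⟩
    rw [hi] at this
    exact this
  have hmem : ∀ n : ℕ, ENNReal.ofReal x ≤ P (Iic (m + 1/((n:ℝ)+1))) := by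
    intro n
    have hpos : (0:ℝ) < 1/((n:ℝ)+1) := by positivity
    obtain ⟨z, hz, hzlt⟩ := exists_lt_of_csInf_lt hne (by linarith : m < m + 1/((n:ℝ)+1))
    calc ENNReal.ofReal x ≤ ENNReal.ofReal (F P z) := ENNReal.ofReal_le_ofReal hz
    _ = P (Iic z) := by rw [F, ENNReal.ofReal_toReal (measure_ne_top _ _)]
    _ ≤ _ := measure_mono (Iic_subset_Iic.2 hzlt.le)
  have hlim : ENNReal.ofReal x ≤ P (Iic m) := ge_of_tendsto hseq (Eventually.of_forall hmem)
  have := ENNReal.toReal_mono (measure_ne_top _ _) hlim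
  rwa [ENNReal.toReal_ofReal hx0.le] at this

lemma quantile_le_iff {x z : ℝ} (hx0 : 0 < x) (hx1 : x < 1) :
    quantileFn P x ≤ z ↔ x ≤ F P z := by
  constructor
  · intro h
    exact le_trans (F_quantile hx0 hx1) (F_mono h)
  · intro h
    exact csInf_le (qSet_bddBelow hx0) h

lemma le_quantile {x s : ℝ} (hx1 : x < 1) (h : (P (Set.Iio s)).toReal < x) :
    s ≤ quantileFn P x := by
  have hx0 : 0 < x := lt_of_le_of_lt ENNReal.toReal_nonneg h
  by_contra hlt
  push_neg at hlt
  obtain ⟨z, hz, hzs⟩ := exists_lt_of_csInf_lt (qSet_nonempty hx1) hlt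
  have : (P (Iic z)).toReal ≤ (P (Set.Iio s)).toReal :=
    ENNReal.toReal_mono (measure_ne_top _ _) (measure_mono (fun w hw => lt_of_le_of_lt hw hzs))
  exact absurd (le_trans hz this) (not_le.2 h)

lemma quantile_monoOn {x y : ℝ} (hx0 : 0 < x) (hy1 : y < 1) (hxy : x ≤ y) :
    quantileFn P x ≤ quantileFn P y :=
  csInf_le_csInf (qSet_bddBelow hx0) (qSet_nonempty hy1)
    (fun z hz => le_trans hxy hz)

/-- measurable version of the quantile function -/
noncomputable def qf (P : Measure ℝ) (x : ℝ) : ℝ :=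
  if x ∈ Set.Ioo (0:ℝ) 1 then quantileFn P x else 0

lemma qf_eq {x : ℝ} (hx : x ∈ Set.Ioo (0:ℝ) 1) : qf P x = quantileFn P x := if_pos hx

lemma measurable_qf : Measurable (qf P) := by
  apply measurable_of_Iic
  intro z
  have : qf P ⁻¹' Iic z =
      (Ioo (0:ℝ) 1 ∩ Iic (F P z)) ∪ ((Ioo (0:ℝ) 1)ᶜ ∩ {x : ℝ | (0:ℝ) ≤ z}) := by
    ext x
    by_cases hx : x ∈ Ioo (0:ℝ) 1
    · simp only [mem_preimage, mem_Iic, qf, if_pos hx, mem_union, mem_inter_iff, hx,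
        true_and, mem_compl_iff, not_true, false_and, or_false, mem_setOf_eq]
      exact quantile_le_iff hx.1 hx.2
    · simp [qf, if_neg hx, hx, mem_setOf_eq]
  rw [this]
  refine ((measurableSet_Ioo.inter measurableSet_Iic).union
    (measurableSet_Ioo.compl.inter ?_))
  by_cases hz : (0:ℝ) ≤ z
  · simp only [hz, setOf_true]; exact MeasurableSet.univ
  · simp only [hz, setOf_false]; exact MeasurableSet.empty

lemma map_qf : Measure.map (qf P) (volume.restrict (Set.Ioo (0:ℝ) 1)) = P := by
  refine Measure.ext_of_Iic _ _ (fun z => ?_)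
  rw [Measure.map_apply (measurable_qf) measurableSet_Iic]
  rw [Measure.restrict_apply (measurable_qf measurableSet_Iic)]
  have hseteq : qf P ⁻¹' Iic z ∩ Ioo 0 1 = Iic (F P z) ∩ Ioo 0 1 := by
    ext x
    simp only [mem_inter_iff, mem_preimage, mem_Iic, and_congr_left_iff]
    intro hx
    rw [qf_eq hx]
    exact quantile_le_iff hx.1 hx.2
  rw [hseteq]
  have h0 : 0 ≤ F P z := F_nonneg z
  have h1 : F P z ≤ 1 := by
    have : P (Iic z) ≤ 1 := prob_le_one
    simpa [F] using ENNReal.toReal_mono (by simp) this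
  have : Iic (F P z) ∩ Ioo (0:ℝ) 1 = Ioo 0 (1:ℝ) ∩ Iic (F P z) := inter_comm _ _
  rw [this]
  rcases lt_or_eq_of_le h1 with h | h
  · have : Ioo (0:ℝ) 1 ∩ Iic (F P z) = Ioc 0 (F P z) := by
      ext x
      simp only [mem_inter_iff, mem_Ioo, mem_Iic, mem_Ioc]
      constructor
      · rintro ⟨⟨h1, h2⟩, h3⟩; exact ⟨h1, h3⟩
      · rintro ⟨h1, h2⟩; exact ⟨⟨h1, lt_of_le_of_lt h2 h⟩, h2⟩
    rw [this, Real.volume_Ioc, sub_zero]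
    simp [F, ENNReal.ofReal_toReal (measure_ne_top _ _)]
  · have heq : Ioo (0:ℝ) 1 ∩ Iic (F P z) = Ioo 0 1 := by
      rw [inter_eq_left]
      intro x hx
      simp only [mem_Iic]
      rw [h]; exact hx.2.le
    rw [heq]
    rw [Real.volume_Ioo]
    have hP : P (Iic z) = 1 := by
      have h2 := congrArg ENNReal.ofReal h
      rwa [F, ENNReal.ofReal_toReal (measure_ne_top _ _), ENNReal.ofReal_one] at h2
    simp [hP]

end CLB

namespace CLB
open Real Filter Topology

/-! ### grid -/

noncomputable def mesh (n : ℕ) : ℝ := π / (n + 2)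

lemma mesh_pos (n : ℕ) : 0 < mesh n := by
  have := Real.pi_pos
  unfold mesh; positivity

noncomputable def θ (n : ℕ) (i : ℕ) : ℝ := -(π/2) + (i+1) * mesh n

lemma θ_mem {n i : ℕ} (h : i ≤ n) : θ n i ∈ Ioo (-(π/2)) (π/2) := by
  have hm := mesh_pos n
  have hpi := Real.pi_pos
  constructor
  · have : (0:ℝ) < (i+1) * mesh n := by positivity
    unfold θ; linarith
  · have h1 : ((i:ℝ)+1) ≤ (n:ℝ)+1 := by exact_mod_cast Nat.add_le_add_right h 1
    have h2 : ((i:ℝ)+1) * mesh n < ((n:ℝ)+2) * mesh n := by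
      apply mul_lt_mul_of_pos_right _ hm
      linarith
    have h3 : ((n:ℝ)+2) * mesh n = π := by
      unfold mesh
      field_simp
    unfold θ; linarith

noncomputable def gr (n : ℕ) (i : ℕ) : ℝ := Real.tan (θ n i)

lemma arctan_gr {n i : ℕ} (h : i ≤ n) : Real.arctan (gr n i) = θ n i :=
  Real.arctan_tan (θ_mem h).1 (θ_mem h).2

lemma gr_mono {n : ℕ} {i j : ℕ} (hij : i ≤ j) (hj : j ≤ n) : gr n i ≤ gr n j := by
  have h1 : Real.arctan (gr n i) ≤ Real.arctan (gr n j) := by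
    rw [arctan_gr (hij.trans hj), arctan_gr hj]
    unfold θ
    have hm := (mesh_pos n).le
    have : ((i:ℝ)+1) ≤ ((j:ℝ)+1) := by exact_mod_cast Nat.add_le_add_right hij 1
    nlinarith [mesh_pos n]
  exact Real.arctan_strictMono.le_iff_le.mp h1

/-! ### rounding -/

noncomputable def kk (n : ℕ) (u : ℝ) : ℕ :=
  ((Finset.Icc 1 n).filter (fun i => gr n i ≤ u)).card

lemma kk_le (n : ℕ) (u : ℝ) : kk n u ≤ n := by
  have := Finset.card_filter_le (Finset.Icc 1 n) (fun i => gr n i ≤ u)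
  simpa [Nat.card_Icc, kk] using this

lemma kk_iff {n : ℕ} {u : ℝ} {j : ℕ} (h1 : 1 ≤ j) (h2 : j ≤ n) :
    gr n j ≤ u ↔ j ≤ kk n u := by
  constructor
  · intro h
    have hsub : Finset.Icc 1 j ⊆ (Finset.Icc 1 n).filter (fun i => gr n i ≤ u) := by
      intro i hi
      simp only [Finset.mem_Icc] at hi
      simp only [Finset.mem_filter, Finset.mem_Icc]
      exact ⟨⟨hi.1, hi.2.trans h2⟩, le_trans (gr_mono hi.2 h2) h⟩
    have := Finset.card_le_card hsub
    simpa [Nat.card_Icc, kk] using this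
  · intro h
    by_contra hlt
    push_neg at hlt
    have hsub : (Finset.Icc 1 n).filter (fun i => gr n i ≤ u) ⊆ Finset.Ico 1 j := by
      intro i hi
      simp only [Finset.mem_filter, Finset.mem_Icc] at hi
      simp only [Finset.mem_Ico]
      refine ⟨hi.1.1, ?_⟩
      by_contra hge
      push_neg at hge
      exact absurd (le_trans (gr_mono hge hi.1.2) hi.2) (not_le.2 hlt)
    have hc := Finset.card_le_card hsub
    rw [Nat.card_Ico] at hc
    have : kk n u < j := lt_of_le_of_lt hc (by omega)
    omega

lemma kk_mono (n : ℕ) : Monotone (kk n) := by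
  intro u v huv
  apply Finset.card_le_card
  intro i hi
  simp only [Finset.mem_filter] at hi ⊢
  exact ⟨hi.1, hi.2.trans huv⟩

noncomputable def rd (n : ℕ) (u : ℝ) : ℝ := gr n (kk n u)

lemma rd_mono (n : ℕ) : Monotone (rd n) :=
  fun u v huv => gr_mono (kk_mono n huv) (kk_le n v)

lemma measurable_rd (n : ℕ) : Measurable (rd n) := (rd_mono n).measurable

lemma arctan_rd_close (n : ℕ) (u : ℝ) :
    |Real.arctan u - Real.arctan (rd n u)| ≤ mesh n := by
  have hk := kk_le n u
  rw [rd, arctan_gr hk]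
  rw [abs_le]
  have hmem := Real.arctan_mem_Ioo u
  constructor
  · -- θ (kk) - mesh ≤ arctan u
    rcases Nat.eq_zero_or_pos (kk n u) with h0 | hpos
    · rw [h0]
      unfold θ
      have := hmem.1
      simp only [Nat.cast_zero]
      linarith [mesh_pos n]
    · have : gr n (kk n u) ≤ u := (kk_iff hpos hk).mpr le_rfl
      have h2 : Real.arctan (gr n (kk n u)) ≤ Real.arctan u :=
        Real.arctan_strictMono.monotone this
      rw [arctan_gr hk] at h2
      linarith [mesh_pos n]
  · -- arctan u ≤ θ (kk) + mesh
    rcases lt_or_ge (kk n u) n with hlt | hge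
    · have h1 : ¬ (gr n (kk n u + 1) ≤ u) := by
        rw [kk_iff (Nat.succ_le_succ (Nat.zero_le _)) hlt]
        omega
      push_neg at h1
      have h2 : Real.arctan u ≤ Real.arctan (gr n (kk n u + 1)) :=
        Real.arctan_strictMono.monotone h1.le
      rw [arctan_gr hlt] at h2
      unfold θ at h2 ⊢
      push_cast at h2 ⊢
      linarith
  -- kk = n case
    · have hkn : kk n u = n := le_antisymm hk hge
      rw [hkn]
      have h2 : Real.arctan u < π/2 := hmem.2
      have h3 : θ n n + mesh n = π/2 := by
        unfold θ mesh
        field_simp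
        ring
      unfold θ at h3 ⊢
      linarith

/-! ### telescoping -/

lemma tele (f : ℕ → ℕ → ℝ) (m l : ℕ) :
    ∑ i ∈ Finset.range m, ∑ j ∈ Finset.range l,
      (f (i+1) j + f i (j+1) - f (i+1) (j+1) - f i j)
    = f 0 l + f m 0 - f m l - f 0 0 := by
  have hinner : ∀ i, ∑ j ∈ Finset.range l,
      (f (i+1) j + f i (j+1) - f (i+1) (j+1) - f i j)
      = (f i l - f (i+1) l) - (f i 0 - f (i+1) 0) := by
    intro i
    have h := Finset.sum_range_sub (fun j => f i j - f (i+1) j) l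
    rw [← h]
    apply Finset.sum_congr rfl
    intro j _
    ring
  rw [Finset.sum_congr rfl (fun i _ => hinner i)]
  have h2 : ∑ i ∈ Finset.range m,
      ((f i l - f (i+1) l) - (f i 0 - f (i+1) 0))
      = ∑ i ∈ Finset.range m,
      ((fun i => f i l - f i 0) i - (fun i => f i l - f i 0) (i+1)) := by
    apply Finset.sum_congr rfl
    intro i _
    ring
  rw [h2, Finset.sum_range_sub' (fun i => f i l - f i 0) m]
  ring

lemma sumcut (F : ℕ → ℝ) {m n : ℕ} (h : m ≤ n) :
    ∑ i ∈ Finset.range n, (if i < m then F i else 0) = ∑ i ∈ Finset.range m, F i := by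
  rw [← Finset.sum_subset (Finset.range_subset_range.2 h)
    (fun x _ hx => by simp [Finset.mem_range] at hx; simp [Nat.not_lt.2 (Nat.le_of_not_lt (by simpa using hx))])]
  · apply Finset.sum_congr rfl
    intro i hi
    simp [Finset.mem_range.1 hi]

lemma sumcut2 (G : ℕ → ℕ → ℝ) {m l N : ℕ} (hm : m ≤ N) (hl : l ≤ N) :
    ∑ i ∈ Finset.range N, ∑ j ∈ Finset.range N,
      (if i < m ∧ j < l then G i j else 0)
    = ∑ i ∈ Finset.range m, ∑ j ∈ Finset.range l, G i j := by
  have h1 : ∀ i, ∑ j ∈ Finset.range N, (if i < m ∧ j < l then G i j else 0)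
      = if i < m then (∑ j ∈ Finset.range l, G i j) else 0 := by
    intro i
    by_cases hi : i < m
    · simp only [hi, true_and]
      exact sumcut (G i) hl
    · simp [hi]
  rw [Finset.sum_congr rfl (fun i _ => h1 i)]
  exact sumcut _ hm

end CLB

namespace CLB2
open CLB Real Filter Topology

noncomputable def cc (ψ : ℝ → ℝ → ℝ) (n i j : ℕ) : ℝ :=
  ψ (gr n (i+1)) (gr n j) + ψ (gr n i) (gr n (j+1))
    - ψ (gr n (i+1)) (gr n (j+1)) - ψ (gr n i) (gr n j)

variable {ψ : ℝ → ℝ → ℝ}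

lemma cc_nonneg (hψqa : ∀ u₁ u₂ v₁ v₂ : ℝ, u₁ ≤ u₂ → v₁ ≤ v₂ →
      ψ u₁ v₁ + ψ u₂ v₂ ≤ ψ u₂ v₁ + ψ u₁ v₂)
    {n i j : ℕ} (hi : i < n) (hj : j < n) : 0 ≤ cc ψ n i j := by
  have h := hψqa (gr n i) (gr n (i+1)) (gr n j) (gr n (j+1))
    (gr_mono (Nat.le_succ i) hi) (gr_mono (Nat.le_succ j) hj)
  unfold cc
  linarith

lemma grid_identity (hψqa : ∀ u₁ u₂ v₁ v₂ : ℝ, u₁ ≤ u₂ → v₁ ≤ v₂ →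
      ψ u₁ v₁ + ψ u₂ v₂ ≤ ψ u₂ v₁ + ψ u₁ v₂)
    (n : ℕ) (u v : ℝ) :
    ψ (rd n u) (rd n v)
      + (∑ i ∈ Finset.range n, ∑ j ∈ Finset.range n,
          (if gr n (i+1) ≤ u ∧ gr n (j+1) ≤ v then cc ψ n i j else 0))
      + ψ (gr n 0) (gr n 0)
    = ψ (rd n u) (gr n 0) + ψ (gr n 0) (rd n v) := by
  have hcond : ∀ i ∈ Finset.range n, ∀ j ∈ Finset.range n,
      (if gr n (i+1) ≤ u ∧ gr n (j+1) ≤ v then cc ψ n i j else 0)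
      = (if i < kk n u ∧ j < kk n v then cc ψ n i j else 0) := by
    intro i hi j hj
    rw [Finset.mem_range] at hi hj
    have e1 : (gr n (i+1) ≤ u) ↔ (i < kk n u) := by
      rw [kk_iff (Nat.succ_le_succ (Nat.zero_le _)) hi]
      exact Nat.add_one_le_iff
    have e2 : (gr n (j+1) ≤ v) ↔ (j < kk n v) := by
      rw [kk_iff (Nat.succ_le_succ (Nat.zero_le _)) hj]
      exact Nat.add_one_le_iff
    exact if_congr (and_congr e1 e2) rfl rfl
  rw [Finset.sum_congr rfl (fun i hi => Finset.sum_congr rfl (fun j hj => hcond i hi j hj))]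
  rw [sumcut2 _ (kk_le n u) (kk_le n v)]
  have ht := tele (fun i j => ψ (gr n i) (gr n j)) (kk n u) (kk n v)
  have hcc : ∀ i j, cc ψ n i j =
      (fun i j => ψ (gr n i) (gr n j)) (i+1) j + (fun i j => ψ (gr n i) (gr n j)) i (j+1)
      - (fun i j => ψ (gr n i) (gr n j)) (i+1) (j+1) - (fun i j => ψ (gr n i) (gr n j)) i j :=
    fun i j => rfl
  rw [Finset.sum_congr rfl (fun i _ => Finset.sum_congr rfl (fun j _ => hcc i j))]
  rw [ht]
  unfold rd
  ring

lemma measurable_rdpair (hψc : Continuous (fun p : ℝ × ℝ => ψ p.1 p.2)) (n : ℕ) :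
    Measurable (fun p : ℝ × ℝ => ψ (rd n p.1) (rd n p.2)) := by
  have : (fun p : ℝ × ℝ => ψ (rd n p.1) (rd n p.2))
      = (fun p : ℝ × ℝ => ψ p.1 p.2) ∘ (fun p : ℝ × ℝ => (rd n p.1, rd n p.2)) := rfl
  rw [this]
  exact hψc.measurable.comp (((measurable_rd n).comp measurable_fst).prodMk
    ((measurable_rd n).comp measurable_snd))

lemma measurable_rd1 (hψc : Continuous (fun p : ℝ × ℝ => ψ p.1 p.2)) (n : ℕ) (b : ℝ) :
    Measurable (fun u : ℝ => ψ (rd n u) b) := by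
  have : (fun u : ℝ => ψ (rd n u) b)
      = (fun p : ℝ × ℝ => ψ p.1 p.2) ∘ (fun u : ℝ => (rd n u, b)) := rfl
  rw [this]
  exact hψc.measurable.comp ((measurable_rd n).prodMk measurable_const)

lemma measurable_rd2 (hψc : Continuous (fun p : ℝ × ℝ => ψ p.1 p.2)) (n : ℕ) (b : ℝ) :
    Measurable (fun v : ℝ => ψ b (rd n v)) := by
  have : (fun v : ℝ => ψ b (rd n v))
      = (fun p : ℝ × ℝ => ψ p.1 p.2) ∘ (fun v : ℝ => (b, rd n v)) := rfl
  rw [this]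
  exact hψc.measurable.comp (measurable_const.prodMk (measurable_rd n))

lemma measurableSet_RR (n : ℕ) (i j : ℕ) :
    MeasurableSet {p : ℝ × ℝ | gr n (i+1) ≤ p.1 ∧ gr n (j+1) ≤ p.2} :=
  (measurableSet_le measurable_const measurable_fst).inter
    (measurableSet_le measurable_const measurable_snd)

lemma lint_identity (hψ0 : ∀ u v, 0 ≤ ψ u v)
    (hψqa : ∀ u₁ u₂ v₁ v₂ : ℝ, u₁ ≤ u₂ → v₁ ≤ v₂ →
      ψ u₁ v₁ + ψ u₂ v₂ ≤ ψ u₂ v₁ + ψ u₁ v₂)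
    (hψc : Continuous (fun p : ℝ × ℝ => ψ p.1 p.2))
    (n : ℕ) (μ : Measure (ℝ × ℝ)) [IsProbabilityMeasure μ] :
    (∫⁻ p, ENNReal.ofReal (ψ (rd n p.1) (rd n p.2)) ∂μ)
      + (∑ i ∈ Finset.range n, ∑ j ∈ Finset.range n,
          ENNReal.ofReal (cc ψ n i j) * μ {p : ℝ × ℝ | gr n (i+1) ≤ p.1 ∧ gr n (j+1) ≤ p.2})
      + ENNReal.ofReal (ψ (gr n 0) (gr n 0))
    = (∫⁻ p, ENNReal.ofReal (ψ (rd n p.1) (gr n 0)) ∂μ)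
      + ∫⁻ p, ENNReal.ofReal (ψ (gr n 0) (rd n p.2)) ∂μ := by
  -- the ENNReal-valued sum function
  set Se : ℝ × ℝ → ℝ≥0∞ := fun p => ∑ i ∈ Finset.range n, ∑ j ∈ Finset.range n,
    Set.indicator {p : ℝ × ℝ | gr n (i+1) ≤ p.1 ∧ gr n (j+1) ≤ p.2}
      (fun _ => ENNReal.ofReal (cc ψ n i j)) p with hSe
  have hSemeas : Measurable Se := by
    apply Finset.measurable_sum
    intro i _
    apply Finset.measurable_sum
    intro j _
    exact (measurable_const.indicator (measurableSet_RR n i j))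
  have hS : (∑ i ∈ Finset.range n, ∑ j ∈ Finset.range n,
      ENNReal.ofReal (cc ψ n i j) * μ {p : ℝ × ℝ | gr n (i+1) ≤ p.1 ∧ gr n (j+1) ≤ p.2})
      = ∫⁻ p, Se p ∂μ := by
    rw [hSe]
    rw [lintegral_finset_sum _ (fun i _ => Finset.measurable_sum _
      (fun j _ => measurable_const.indicator (measurableSet_RR n i j)))]
    apply Finset.sum_congr rfl
    intro i _
    rw [lintegral_finset_sum _ (fun j _ => measurable_const.indicator (measurableSet_RR n i j))]
    apply Finset.sum_congr rfl
    intro j _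
    rw [lintegral_indicator_const (measurableSet_RR n i j)]
  have hΦmeas : Measurable (fun p : ℝ × ℝ => ENNReal.ofReal (ψ (rd n p.1) (rd n p.2))) :=
    (measurable_rdpair hψc n).ennreal_ofReal
  have hA1meas : Measurable (fun p : ℝ × ℝ => ENNReal.ofReal (ψ (rd n p.1) (gr n 0))) :=
    ((measurable_rd1 hψc n (gr n 0)).comp measurable_fst).ennreal_ofReal
  have hA2meas : Measurable (fun p : ℝ × ℝ => ENNReal.ofReal (ψ (gr n 0) (rd n p.2))) :=
    ((measurable_rd2 hψc n (gr n 0)).comp measurable_snd).ennreal_ofReal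
  have hK : ENNReal.ofReal (ψ (gr n 0) (gr n 0))
      = ∫⁻ _ , ENNReal.ofReal (ψ (gr n 0) (gr n 0)) ∂μ := by
    rw [lintegral_const, measure_univ, mul_one]
  rw [hS, hK]
  rw [← lintegral_add_left hΦmeas, ← lintegral_add_left (f := fun a => ENNReal.ofReal (ψ (rd n a.1) (rd n a.2)) + Se a) (hΦmeas.add hSemeas),
    ← lintegral_add_left hA1meas]
  apply lintegral_congr
  intro p
  -- pointwise identity
  have hid := grid_identity hψqa n p.1 p.2
  have hSr : Se p = ENNReal.ofReal (∑ i ∈ Finset.range n, ∑ j ∈ Finset.range n,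
      (if gr n (i+1) ≤ p.1 ∧ gr n (j+1) ≤ p.2 then cc ψ n i j else 0)) := by
    rw [ENNReal.ofReal_sum_of_nonneg]
    · apply Finset.sum_congr rfl
      intro i hi
      rw [ENNReal.ofReal_sum_of_nonneg]
      · apply Finset.sum_congr rfl
        intro j hj
        by_cases h : gr n (i+1) ≤ p.1 ∧ gr n (j+1) ≤ p.2
        · simp [Set.indicator, h, Set.mem_setOf_eq]
        · simp [Set.indicator, h, Set.mem_setOf_eq]
      · intro j hj
        by_cases h : gr n (i+1) ≤ p.1 ∧ gr n (j+1) ≤ p.2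
        · simp only [if_pos h]
          exact cc_nonneg hψqa (Finset.mem_range.1 hi) (Finset.mem_range.1 hj)
        · simp [h]
    · intro i hi
      apply Finset.sum_nonneg
      intro j hj
      by_cases h : gr n (i+1) ≤ p.1 ∧ gr n (j+1) ≤ p.2
      · simp only [if_pos h]
        exact cc_nonneg hψqa (Finset.mem_range.1 hi) (Finset.mem_range.1 hj)
      · simp [h]
  have hSnn : 0 ≤ ∑ i ∈ Finset.range n, ∑ j ∈ Finset.range n,
      (if gr n (i+1) ≤ p.1 ∧ gr n (j+1) ≤ p.2 then cc ψ n i j else 0) := by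
    apply Finset.sum_nonneg; intro i hi
    apply Finset.sum_nonneg; intro j hj
    by_cases h : gr n (i+1) ≤ p.1 ∧ gr n (j+1) ≤ p.2
    · simp only [if_pos h]
      exact cc_nonneg hψqa (Finset.mem_range.1 hi) (Finset.mem_range.1 hj)
    · simp [h]
  rw [hSr]
  rw [← ENNReal.ofReal_add (hψ0 _ _) hSnn, ← ENNReal.ofReal_add (add_nonneg (hψ0 _ _) hSnn) (hψ0 _ _),
    ← ENNReal.ofReal_add (hψ0 _ _) (hψ0 _ _)]
  exact congrArg ENNReal.ofReal hid

end CLB2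

namespace Core
open CLB CLB2 Real Filter Topology

lemma coren (P Q : Measure ℝ) [IsProbabilityMeasure P] [IsProbabilityMeasure Q]
    (ψ : ℝ → ℝ → ℝ) (c : ℝ) (hc : 0 ≤ c) (hψ0 : ∀ u v, 0 ≤ ψ u v)
    (hψqa : ∀ u₁ u₂ v₁ v₂ : ℝ, u₁ ≤ u₂ → v₁ ≤ v₂ →
      ψ u₁ v₁ + ψ u₂ v₂ ≤ ψ u₂ v₁ + ψ u₁ v₂)
    (hψc : Continuous (fun p : ℝ × ℝ => ψ p.1 p.2))
    (hLip : ∀ u v u' v' : ℝ, ψ u v ≤ ψ u' v'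
      + c * (|Real.arctan u - Real.arctan u'| + |Real.arctan v - Real.arctan v'|))
    (pp rr : Measure (ℝ × ℝ)) [IsProbabilityMeasure pp] [IsProbabilityMeasure rr]
    (hp1 : pp.map Prod.fst = P) (hp2 : pp.map Prod.snd = Q)
    (hr1 : rr.map Prod.fst = P) (hr2 : rr.map Prod.snd = Q)
    (hsurv : ∀ s t : ℝ, pp {p : ℝ × ℝ | s ≤ p.1 ∧ t ≤ p.2} ≤ rr {p : ℝ × ℝ | s ≤ p.1 ∧ t ≤ p.2})
    (n : ℕ) :
    ∫⁻ p, ENNReal.ofReal (ψ p.1 p.2) ∂rr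
      ≤ (∫⁻ p, ENNReal.ofReal (ψ p.1 p.2) ∂pp) + ENNReal.ofReal (4 * (c * mesh n)) := by
  -- marginal integrals agree
  have hmarg1 : ∀ (μ : Measure (ℝ × ℝ)), μ.map Prod.fst = P →
      (∫⁻ p : ℝ × ℝ, ENNReal.ofReal (ψ (rd n p.1) (gr n 0)) ∂μ)
      = ∫⁻ u, ENNReal.ofReal (ψ (rd n u) (gr n 0)) ∂P := by
    intro μ hμ
    rw [← hμ, lintegral_map (measurable_rd1 hψc n (gr n 0)).ennreal_ofReal measurable_fst]
  have hmarg2 : ∀ (μ : Measure (ℝ × ℝ)), μ.map Prod.snd = Q →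
      (∫⁻ p : ℝ × ℝ, ENNReal.ofReal (ψ (gr n 0) (rd n p.2)) ∂μ)
      = ∫⁻ v, ENNReal.ofReal (ψ (gr n 0) (rd n v)) ∂Q := by
    intro μ hμ
    rw [← hμ, lintegral_map (measurable_rd2 hψc n (gr n 0)).ennreal_ofReal measurable_snd]
  have Iρ := lint_identity hψ0 hψqa hψc n rr
  have Iπ := lint_identity hψ0 hψqa hψc n pp
  rw [hmarg1 rr hr1, hmarg2 rr hr2] at Iρ
  rw [hmarg1 pp hp1, hmarg2 pp hp2] at Iπ
  set aρ := ∫⁻ p, ENNReal.ofReal (ψ (rd n p.1) (rd n p.2)) ∂rr with haρ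
  set aπ := ∫⁻ p, ENNReal.ofReal (ψ (rd n p.1) (rd n p.2)) ∂pp with haπ
  set Sρ := ∑ i ∈ Finset.range n, ∑ j ∈ Finset.range n,
      ENNReal.ofReal (cc ψ n i j) * rr {p : ℝ × ℝ | gr n (i+1) ≤ p.1 ∧ gr n (j+1) ≤ p.2} with hSρ
  set Sπ := ∑ i ∈ Finset.range n, ∑ j ∈ Finset.range n,
      ENNReal.ofReal (cc ψ n i j) * pp {p : ℝ × ℝ | gr n (i+1) ≤ p.1 ∧ gr n (j+1) ≤ p.2} with hSπ
  have hSρtop : Sρ ≠ ⊤ := by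
    rw [hSρ]
    apply LT.lt.ne
    apply ENNReal.sum_lt_top.2
    intro i _
    apply ENNReal.sum_lt_top.2
    intro j _
    exact ENNReal.mul_lt_top ENNReal.ofReal_lt_top (measure_lt_top _ _)
  have hKtop : ENNReal.ofReal (ψ (gr n 0) (gr n 0)) ≠ ⊤ := ENNReal.ofReal_ne_top
  have heq : aρ + Sρ = aπ + Sπ := by
    have := Iρ.trans Iπ.symm
    exact WithTop.add_right_cancel hKtop this
  have hSle : Sπ ≤ Sρ := by
    rw [hSρ, hSπ]
    apply Finset.sum_le_sum
    intro i _
    apply Finset.sum_le_sum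
    intro j _
    exact mul_le_mul_right (hsurv _ _) _
  have hcore : aρ ≤ aπ := by
    have h1 : aρ + Sρ ≤ aπ + Sρ := by
      rw [heq]
      exact add_le_add_right hSle _
    exact (ENNReal.add_le_add_iff_right hSρtop).1 h1
  -- Lipschitz error bounds
  have hEps : ∀ u v : ℝ, ψ u v ≤ ψ (rd n u) (rd n v) + 2 * (c * mesh n) := by
    intro u v
    have h := hLip u v (rd n u) (rd n v)
    have h1 := arctan_rd_close n u
    have h2 := arctan_rd_close n v
    have : c * (|Real.arctan u - Real.arctan (rd n u)| + |Real.arctan v - Real.arctan (rd n v)|)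
        ≤ c * (mesh n + mesh n) := by
      apply mul_le_mul_of_nonneg_left _ hc
      linarith
    nlinarith [this]
  have hEps' : ∀ u v : ℝ, ψ (rd n u) (rd n v) ≤ ψ u v + 2 * (c * mesh n) := by
    intro u v
    have h := hLip (rd n u) (rd n v) u v
    have h1 := arctan_rd_close n u
    have h2 := arctan_rd_close n v
    rw [abs_sub_comm (Real.arctan u)] at h1
    rw [abs_sub_comm (Real.arctan v)] at h2
    have : c * (|Real.arctan (rd n u) - Real.arctan u| + |Real.arctan (rd n v) - Real.arctan v|)
        ≤ c * (mesh n + mesh n) := by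
      apply mul_le_mul_of_nonneg_left _ hc
      linarith
    nlinarith [this]
  have hmesh := (mesh_pos n).le
  have step1 : ∫⁻ p, ENNReal.ofReal (ψ p.1 p.2) ∂rr ≤ aρ + ENNReal.ofReal (2 * (c * mesh n)) := by
    rw [haρ]
    have : ∫⁻ p, ENNReal.ofReal (ψ p.1 p.2) ∂rr
        ≤ ∫⁻ p, (ENNReal.ofReal (ψ (rd n p.1) (rd n p.2)) + ENNReal.ofReal (2 * (c * mesh n))) ∂rr := by
      apply lintegral_mono
      intro p
      calc ENNReal.ofReal (ψ p.1 p.2)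
          ≤ ENNReal.ofReal (ψ (rd n p.1) (rd n p.2) + 2 * (c * mesh n)) :=
            ENNReal.ofReal_le_ofReal (hEps p.1 p.2)
        _ ≤ _ := ENNReal.ofReal_add_le
    refine this.trans ?_
    rw [lintegral_add_right _ measurable_const, lintegral_const, measure_univ, mul_one]
  have step2 : aπ ≤ (∫⁻ p, ENNReal.ofReal (ψ p.1 p.2) ∂pp) + ENNReal.ofReal (2 * (c * mesh n)) := by
    rw [haπ]
    have : ∫⁻ p, ENNReal.ofReal (ψ (rd n p.1) (rd n p.2)) ∂pp
        ≤ ∫⁻ p, (ENNReal.ofReal (ψ p.1 p.2) + ENNReal.ofReal (2 * (c * mesh n))) ∂pp := by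
      apply lintegral_mono
      intro p
      calc ENNReal.ofReal (ψ (rd n p.1) (rd n p.2))
          ≤ ENNReal.ofReal (ψ p.1 p.2 + 2 * (c * mesh n)) :=
            ENNReal.ofReal_le_ofReal (hEps' p.1 p.2)
        _ ≤ _ := ENNReal.ofReal_add_le
    refine this.trans ?_
    rw [lintegral_add_right _ measurable_const, lintegral_const, measure_univ, mul_one]
  calc ∫⁻ p, ENNReal.ofReal (ψ p.1 p.2) ∂rr
      ≤ aρ + ENNReal.ofReal (2 * (c * mesh n)) := step1
    _ ≤ aπ + ENNReal.ofReal (2 * (c * mesh n)) := add_le_add_left hcore _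
    _ ≤ ((∫⁻ p, ENNReal.ofReal (ψ p.1 p.2) ∂pp) + ENNReal.ofReal (2 * (c * mesh n)))
        + ENNReal.ofReal (2 * (c * mesh n)) := add_le_add_left step2 _
    _ = (∫⁻ p, ENNReal.ofReal (ψ p.1 p.2) ∂pp)
        + (ENNReal.ofReal (2 * (c * mesh n)) + ENNReal.ofReal (2 * (c * mesh n))) := by
          rw [add_assoc]
    _ = (∫⁻ p, ENNReal.ofReal (ψ p.1 p.2) ∂pp) + ENNReal.ofReal (4 * (c * mesh n)) := by
          rw [← ENNReal.ofReal_add (by positivity) (by positivity)]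
          ring_nf

lemma core (P Q : Measure ℝ) [IsProbabilityMeasure P] [IsProbabilityMeasure Q]
    (ψ : ℝ → ℝ → ℝ) (c : ℝ) (hc : 0 ≤ c) (hψ0 : ∀ u v, 0 ≤ ψ u v)
    (hψqa : ∀ u₁ u₂ v₁ v₂ : ℝ, u₁ ≤ u₂ → v₁ ≤ v₂ →
      ψ u₁ v₁ + ψ u₂ v₂ ≤ ψ u₂ v₁ + ψ u₁ v₂)
    (hψc : Continuous (fun p : ℝ × ℝ => ψ p.1 p.2))
    (hLip : ∀ u v u' v' : ℝ, ψ u v ≤ ψ u' v'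
      + c * (|Real.arctan u - Real.arctan u'| + |Real.arctan v - Real.arctan v'|))
    (pp rr : Measure (ℝ × ℝ)) [IsProbabilityMeasure pp] [IsProbabilityMeasure rr]
    (hp1 : pp.map Prod.fst = P) (hp2 : pp.map Prod.snd = Q)
    (hr1 : rr.map Prod.fst = P) (hr2 : rr.map Prod.snd = Q)
    (hsurv : ∀ s t : ℝ, pp {p : ℝ × ℝ | s ≤ p.1 ∧ t ≤ p.2} ≤ rr {p : ℝ × ℝ | s ≤ p.1 ∧ t ≤ p.2}) :
    ∫⁻ p, ENNReal.ofReal (ψ p.1 p.2) ∂rr ≤ ∫⁻ p, ENNReal.ofReal (ψ p.1 p.2) ∂pp := by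
  apply ENNReal.le_of_forall_pos_le_add
  intro ε hε _
  obtain ⟨n, hn⟩ := exists_nat_gt (4 * (c * π) / (ε : ℝ))
  have hεpos : (0:ℝ) < (ε : ℝ) := hε
  have hbound : 4 * (c * mesh n) ≤ (ε : ℝ) := by
    rw [div_lt_iff₀ hεpos] at hn
    unfold mesh
    have hn2 : (0:ℝ) < (n:ℝ) + 2 := by positivity
    rw [mul_comm c, div_mul_eq_mul_div, ← mul_div_assoc, div_le_iff₀ hn2]
    have hcpi : (0:ℝ) ≤ c * π := mul_nonneg hc Real.pi_pos.le
    nlinarith [hεpos]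
  calc ∫⁻ p, ENNReal.ofReal (ψ p.1 p.2) ∂rr
      ≤ (∫⁻ p, ENNReal.ofReal (ψ p.1 p.2) ∂pp) + ENNReal.ofReal (4 * (c * mesh n)) :=
        coren P Q ψ c hc hψ0 hψqa hψc hLip pp rr hp1 hp2 hr1 hr2 hsurv n
    _ ≤ (∫⁻ p, ENNReal.ofReal (ψ p.1 p.2) ∂pp) + ε := by
        apply add_le_add_right
        calc ENNReal.ofReal (4 * (c * mesh n)) ≤ ENNReal.ofReal (ε:ℝ) :=
            ENNReal.ofReal_le_ofReal hbound
          _ = (ε : ℝ≥0∞) := ENNReal.ofReal_coe_nnreal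

end Core

namespace INF
open Real Filter Topology

noncomputable def dd (x y : ℝ) : ℝ := |Real.arctan x - Real.arctan y|

lemma dd_nonneg (x y : ℝ) : 0 ≤ dd x y := abs_nonneg _
lemma dd_self (x : ℝ) : dd x x = 0 := by simp [dd]
lemma dd_triangle (x y z : ℝ) : dd x z ≤ dd x y + dd y z := abs_sub_le _ _ _

variable (ψ : ℝ → ℝ → ℝ)

noncomputable def phi (N : ℕ) (u v : ℝ) : ℝ :=
  sInf (Set.range (fun ab : ℝ × ℝ => ψ ab.1 ab.2 + N * (dd u ab.1 + dd v ab.2)))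

variable {ψ}

section phiBasic
variable (hψ0 : ∀ u v, 0 ≤ ψ u v)
include hψ0

lemma phi_bddBelow (N : ℕ) (u v : ℝ) :
    BddBelow (Set.range (fun ab : ℝ × ℝ => ψ ab.1 ab.2 + N * (dd u ab.1 + dd v ab.2))) := by
  refine ⟨0, ?_⟩
  rintro y ⟨ab, rfl⟩
  have := hψ0 ab.1 ab.2
  have h1 := dd_nonneg u ab.1
  have h2 := dd_nonneg v ab.2
  positivity

lemma phi_nonneg (N : ℕ) (u v : ℝ) : 0 ≤ phi ψ N u v := by
  apply le_csInf (Set.range_nonempty _)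
  rintro y ⟨ab, rfl⟩
  have := hψ0 ab.1 ab.2
  have h1 := dd_nonneg u ab.1
  have h2 := dd_nonneg v ab.2
  positivity

lemma phi_le (N : ℕ) (u v : ℝ) : phi ψ N u v ≤ ψ u v := by
  have h := csInf_le (phi_bddBelow hψ0 N u v) ⟨(u, v), rfl⟩
  simpa [dd_self, phi] using h

lemma phi_mono_N {N M : ℕ} (h : N ≤ M) (u v : ℝ) : phi ψ N u v ≤ phi ψ M u v := by
  apply le_csInf (Set.range_nonempty _)
  rintro y ⟨ab, rfl⟩
  calc phi ψ N u v ≤ ψ ab.1 ab.2 + N * (dd u ab.1 + dd v ab.2) :=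
        csInf_le (phi_bddBelow hψ0 N u v) ⟨ab, rfl⟩
    _ ≤ ψ ab.1 ab.2 + M * (dd u ab.1 + dd v ab.2) := by
        have h1 := dd_nonneg u ab.1
        have h2 := dd_nonneg v ab.2
        have : (N:ℝ) ≤ M := by exact_mod_cast h
        nlinarith

lemma phi_lip (N : ℕ) (u v u' v' : ℝ) :
    phi ψ N u v ≤ phi ψ N u' v' + N * (dd u u' + dd v v') := by
  have key : ∀ ab : ℝ × ℝ,
      phi ψ N u v - N * (dd u u' + dd v v') ≤ ψ ab.1 ab.2 + N * (dd u' ab.1 + dd v' ab.2) := by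
    intro ab
    have h1 : phi ψ N u v ≤ ψ ab.1 ab.2 + N * (dd u ab.1 + dd v ab.2) :=
      csInf_le (phi_bddBelow hψ0 N u v) ⟨ab, rfl⟩
    have h2 : dd u ab.1 ≤ dd u u' + dd u' ab.1 := dd_triangle _ _ _
    have h3 : dd v ab.2 ≤ dd v v' + dd v' ab.2 := dd_triangle _ _ _
    have hN : (0:ℝ) ≤ N := Nat.cast_nonneg N
    nlinarith
  have h2 : phi ψ N u v - N * (dd u u' + dd v v') ≤ phi ψ N u' v' :=
    le_csInf (Set.range_nonempty _) (fun y hy => by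
      obtain ⟨ab, rfl⟩ := hy
      exact key ab)
  linarith

end phiBasic

/-- rearrangement inequality for absolute values -/
lemma abs_submod {x₁ x₂ α β : ℝ} (hx : x₁ ≤ x₂) (hab : α ≤ β) :
    |x₁ - α| + |x₂ - β| ≤ |x₂ - α| + |x₁ - β| := by
  rcases abs_cases (x₁ - α) with ⟨e1, f1⟩ | ⟨e1, f1⟩ <;>
  rcases abs_cases (x₂ - β) with ⟨e2, f2⟩ | ⟨e2, f2⟩ <;>
  rcases abs_cases (x₂ - α) with ⟨e3, f3⟩ | ⟨e3, f3⟩ <;>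
  rcases abs_cases (x₁ - β) with ⟨e4, f4⟩ | ⟨e4, f4⟩ <;>
  linarith

lemma dd_submod {x₁ x₂ a a' : ℝ} (hx : x₁ ≤ x₂) :
    dd x₁ (min a a') + dd x₂ (max a a') ≤ dd x₂ a + dd x₁ a' := by
  have hmin : Real.arctan (min a a') = min (Real.arctan a) (Real.arctan a') :=
    Real.arctan_strictMono.monotone.map_min
  have hmax : Real.arctan (max a a') = max (Real.arctan a) (Real.arctan a') :=
    Real.arctan_strictMono.monotone.map_max
  have hx' : Real.arctan x₁ ≤ Real.arctan x₂ := Real.arctan_strictMono.monotone hx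
  unfold dd
  rw [hmin, hmax]
  rcases le_total (Real.arctan a) (Real.arctan a') with h | h
  · rw [min_eq_left h, max_eq_right h]
    exact abs_submod hx' h
  · rw [min_eq_right h, max_eq_left h]
    have := abs_submod hx' h
    linarith [abs_submod (le_refl (Real.arctan x₁)) h]

lemma psi_lattice (hψqa : ∀ u₁ u₂ v₁ v₂ : ℝ, u₁ ≤ u₂ → v₁ ≤ v₂ →
      ψ u₁ v₁ + ψ u₂ v₂ ≤ ψ u₂ v₁ + ψ u₁ v₂) (a b a' b' : ℝ) :
    ψ (min a a') (min b b') + ψ (max a a') (max b b') ≤ ψ a b + ψ a' b' := by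
  rcases le_total a a' with ha | ha <;> rcases le_total b b' with hb | hb
  · rw [min_eq_left ha, max_eq_right ha, min_eq_left hb, max_eq_right hb]
  · rw [min_eq_left ha, max_eq_right ha, min_eq_right hb, max_eq_left hb]
    have := hψqa a a' b' b ha hb
    linarith
  · rw [min_eq_right ha, max_eq_left ha, min_eq_left hb, max_eq_right hb]
    have := hψqa a' a b b' ha hb
    linarith
  · rw [min_eq_right ha, max_eq_left ha, min_eq_right hb, max_eq_left hb]
    have := hψqa a' a b' b ha hb
    linarith

lemma phi_qa (hψ0 : ∀ u v, 0 ≤ ψ u v)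
    (hψqa : ∀ u₁ u₂ v₁ v₂ : ℝ, u₁ ≤ u₂ → v₁ ≤ v₂ →
      ψ u₁ v₁ + ψ u₂ v₂ ≤ ψ u₂ v₁ + ψ u₁ v₂) (N : ℕ)
    {u₁ u₂ v₁ v₂ : ℝ} (hu : u₁ ≤ u₂) (hv : v₁ ≤ v₂) :
    phi ψ N u₁ v₁ + phi ψ N u₂ v₂ ≤ phi ψ N u₂ v₁ + phi ψ N u₁ v₂ := by
  apply le_of_forall_pos_le_add
  intro ε hε
  have h1 : phi ψ N u₂ v₁ < phi ψ N u₂ v₁ + ε / 2 := by linarith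
  obtain ⟨y1, hy1mem, hy1⟩ := exists_lt_of_csInf_lt (Set.range_nonempty _) h1
  obtain ⟨ab, rfl⟩ := hy1mem
  have h2 : phi ψ N u₁ v₂ < phi ψ N u₁ v₂ + ε / 2 := by linarith
  obtain ⟨y2, hy2mem, hy2⟩ := exists_lt_of_csInf_lt (Set.range_nonempty _) h2
  obtain ⟨ab', rfl⟩ := hy2mem
  obtain ⟨a, b⟩ := ab
  obtain ⟨a', b'⟩ := ab'
  simp only at hy1 hy2
  have c1 : phi ψ N u₁ v₁ ≤ ψ (min a a') (min b b')
      + N * (dd u₁ (min a a') + dd v₁ (min b b')) :=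
    csInf_le (phi_bddBelow hψ0 N u₁ v₁) ⟨(min a a', min b b'), rfl⟩
  have c2 : phi ψ N u₂ v₂ ≤ ψ (max a a') (max b b')
      + N * (dd u₂ (max a a') + dd v₂ (max b b')) :=
    csInf_le (phi_bddBelow hψ0 N u₂ v₂) ⟨(max a a', max b b'), rfl⟩
  have hlat := psi_lattice hψqa a b a' b'
  have hdu : dd u₁ (min a a') + dd u₂ (max a a') ≤ dd u₂ a + dd u₁ a' := dd_submod hu
  have hdv : dd v₁ (min b b') + dd v₂ (max b b') ≤ dd v₂ b' + dd v₁ b := by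
    have := dd_submod (a := b') (a' := b) hv
    rw [min_comm b' b, max_comm b' b] at this
    exact this
  have hN : (0:ℝ) ≤ N := Nat.cast_nonneg N
  nlinarith

lemma phi_cont (hψ0 : ∀ u v, 0 ≤ ψ u v) (N : ℕ) :
    Continuous (fun p : ℝ × ℝ => phi ψ N p.1 p.2) := by
  rw [Metric.continuous_iff]
  intro q ε hε
  -- the error function
  have hg : ContinuousAt (fun p : ℝ × ℝ => (N:ℝ) * (dd p.1 q.1 + dd p.2 q.2)) q := by
    apply ContinuousAt.mul continuousAt_const
    apply ContinuousAt.add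
    · exact ((Real.continuous_arctan.comp continuous_fst).sub continuous_const).abs.continuousAt
    · exact ((Real.continuous_arctan.comp continuous_snd).sub continuous_const).abs.continuousAt
  have hg0 : (fun p : ℝ × ℝ => (N:ℝ) * (dd p.1 q.1 + dd p.2 q.2)) q = 0 := by
    simp [dd_self]
  have hev : ∀ᶠ p in nhds q, (N:ℝ) * (dd p.1 q.1 + dd p.2 q.2) < ε := by
    have ht := hg.tendsto
    rw [show (N:ℝ) * (dd q.1 q.1 + dd q.2 q.2) = 0 by simp [dd_self]] at ht
    exact ht.eventually (eventually_lt_nhds hε)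
  rw [Metric.eventually_nhds_iff] at hev
  obtain ⟨δ, hδ, hδev⟩ := hev
  refine ⟨δ, hδ, fun {p} hp => ?_⟩
  have herr := hδev hp
  have hb1 : phi ψ N p.1 p.2 ≤ phi ψ N q.1 q.2 + N * (dd p.1 q.1 + dd p.2 q.2) :=
    phi_lip hψ0 N _ _ _ _
  have hb2 : phi ψ N q.1 q.2 ≤ phi ψ N p.1 p.2 + N * (dd q.1 p.1 + dd q.2 p.2) :=
    phi_lip hψ0 N _ _ _ _
  have hsymm1 : dd q.1 p.1 = dd p.1 q.1 := abs_sub_comm _ _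
  have hsymm2 : dd q.2 p.2 = dd p.2 q.2 := abs_sub_comm _ _
  rw [hsymm1, hsymm2] at hb2
  rw [Real.dist_eq, abs_lt]
  constructor <;> nlinarith [dd_nonneg p.1 q.1, dd_nonneg p.2 q.2, (Nat.cast_nonneg N : (0:ℝ) ≤ N)]

lemma phi_sup (hψ0 : ∀ u v, 0 ≤ ψ u v)
    (hψc : Continuous (fun p : ℝ × ℝ => ψ p.1 p.2)) (u v : ℝ) :
    (⨆ N : ℕ, ENNReal.ofReal (phi ψ N u v)) = ENNReal.ofReal (ψ u v) := by
  apply le_antisymm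
  · exact iSup_le (fun N => ENNReal.ofReal_le_ofReal (phi_le hψ0 N u v))
  · apply ENNReal.le_of_forall_pos_le_add
    intro ε hε hlt
    have hεpos : (0:ℝ) < (ε:ℝ) := hε
    -- find N with ψ u v - ε ≤ phi N u v
    obtain ⟨δ, hδpos, hδ⟩ := Metric.continuous_iff.mp hψc (u, v) (ε:ℝ) hεpos
    set r₁ : ℝ := min (Real.arctan (u + δ/2) - Real.arctan u)
      (Real.arctan u - Real.arctan (u - δ/2)) with hr₁
    set r₂ : ℝ := min (Real.arctan (v + δ/2) - Real.arctan v)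
      (Real.arctan v - Real.arctan (v - δ/2)) with hr₂
    have hr₁pos : 0 < r₁ := by
      apply lt_min
      · have := Real.arctan_strictMono (by linarith : u < u + δ/2)
        linarith
      · have := Real.arctan_strictMono (by linarith : u - δ/2 < u)
        linarith
    have hr₂pos : 0 < r₂ := by
      apply lt_min
      · have := Real.arctan_strictMono (by linarith : v < v + δ/2)
        linarith
      · have := Real.arctan_strictMono (by linarith : v - δ/2 < v)
        linarith
    set r : ℝ := min r₁ r₂ with hr
    have hrpos : 0 < r := lt_min hr₁pos hr₂pos
    set N : ℕ := ⌈ψ u v / r⌉₊ with hN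
    have hkey : ψ u v - ε ≤ phi ψ N u v := by
      apply le_csInf (Set.range_nonempty _)
      rintro y ⟨⟨a, b⟩, rfl⟩
      simp only
      by_cases hcase : |a - u| < δ/2 ∧ |b - v| < δ/2
      · -- close case
        have hdist : dist (a, b) (u, v) < δ := by
          rw [Prod.dist_eq]
          apply max_lt
          · rw [Real.dist_eq]; linarith [hcase.1]
          · rw [Real.dist_eq]; linarith [hcase.2]
        have hclose := hδ (a, b) hdist
        simp only [Real.dist_eq] at hclose
        rw [abs_lt] at hclose
        have h1 := dd_nonneg u a
        have h2 := dd_nonneg v b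
        have hN0 : (0:ℝ) ≤ N := Nat.cast_nonneg N
        nlinarith [hclose.1, hclose.2]
      · -- far case : penalty at least N * r ≥ ψ u v
        have hfar : r ≤ dd u a + dd v b := by
          rw [not_and_or] at hcase
          rcases hcase with hfar1 | hfar2
          · push_neg at hfar1
            have : r₁ ≤ dd u a := by
              rcases le_or_gt (u + δ/2) a with ha | ha
              · have := Real.arctan_strictMono.monotone ha
                have habs : Real.arctan (u + δ/2) - Real.arctan u ≤ |Real.arctan u - Real.arctan a| := by
                  rw [abs_sub_comm, abs_of_nonneg (by
                    have := Real.arctan_strictMono.monotone (by linarith : u ≤ a)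
                    linarith)]
                  linarith
                calc r₁ ≤ Real.arctan (u + δ/2) - Real.arctan u := min_le_left _ _
                  _ ≤ _ := habs
              · have ha2 : a ≤ u - δ/2 := by
                  rcases abs_cases (a - u) with ⟨e, f⟩ | ⟨e, f⟩ <;> [linarith [hfar1]; linarith [hfar1]]
                have := Real.arctan_strictMono.monotone ha2
                have habs : Real.arctan u - Real.arctan (u - δ/2) ≤ |Real.arctan u - Real.arctan a| := by
                  rw [abs_of_nonneg (by
                    have := Real.arctan_strictMono.monotone (by linarith : a ≤ u)
                    linarith)]
                  linarith
                calc r₁ ≤ Real.arctan u - Real.arctan (u - δ/2) := min_le_right _ _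
                  _ ≤ _ := habs
            calc r ≤ r₁ := min_le_left _ _
              _ ≤ dd u a := this
              _ ≤ dd u a + dd v b := by linarith [dd_nonneg v b]
          · push_neg at hfar2
            have : r₂ ≤ dd v b := by
              rcases le_or_gt (v + δ/2) b with hb | hb
              · have := Real.arctan_strictMono.monotone hb
                have habs : Real.arctan (v + δ/2) - Real.arctan v ≤ |Real.arctan v - Real.arctan b| := by
                  rw [abs_sub_comm, abs_of_nonneg (by
                    have := Real.arctan_strictMono.monotone (by linarith : v ≤ b)
                    linarith)]
                  linarith
                calc r₂ ≤ Real.arctan (v + δ/2) - Real.arctan v := min_le_left _ _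
                  _ ≤ _ := habs
              · have hb2 : b ≤ v - δ/2 := by
                  rcases abs_cases (b - v) with ⟨e, f⟩ | ⟨e, f⟩ <;> [linarith [hfar2]; linarith [hfar2]]
                have := Real.arctan_strictMono.monotone hb2
                have habs : Real.arctan v - Real.arctan (v - δ/2) ≤ |Real.arctan v - Real.arctan b| := by
                  rw [abs_of_nonneg (by
                    have := Real.arctan_strictMono.monotone (by linarith : b ≤ v)
                    linarith)]
                  linarith
                calc r₂ ≤ Real.arctan v - Real.arctan (v - δ/2) := min_le_right _ _
                  _ ≤ _ := habs
            calc r ≤ r₂ := min_le_right _ _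
              _ ≤ dd v b := this
              _ ≤ dd u a + dd v b := by linarith [dd_nonneg u a]
        have hNr : ψ u v ≤ N * r := by
          have hceil : ψ u v / r ≤ (N : ℝ) := Nat.le_ceil _
          rw [div_le_iff₀ hrpos] at hceil
          linarith
        have hψab := hψ0 a b
        have hN0 : (0:ℝ) ≤ N := Nat.cast_nonneg N
        nlinarith
    calc ENNReal.ofReal (ψ u v) ≤ ENNReal.ofReal (phi ψ N u v + ε) := by
          apply ENNReal.ofReal_le_ofReal
          linarith
      _ ≤ ENNReal.ofReal (phi ψ N u v) + ENNReal.ofReal (ε:ℝ) := ENNReal.ofReal_add_le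
      _ ≤ (⨆ M : ℕ, ENNReal.ofReal (phi ψ M u v)) + ε := by
          apply add_le_add (le_iSup (fun M => ENNReal.ofReal (phi ψ M u v)) N)
          rw [ENNReal.ofReal_coe_nnreal]

end INF


namespace CLB4
open Real Filter Topology

instance lamProb : IsProbabilityMeasure (volume.restrict (Set.Ioo (0:ℝ) 1)) :=
  ⟨by rw [Measure.restrict_apply_univ, Real.volume_Ioo]; norm_num⟩

variable (P Q : Measure ℝ) [IsProbabilityMeasure P] [IsProbabilityMeasure Q]

lemma ici_eq (s : ℝ) : P (Set.Ici s) = ENNReal.ofReal (1 - (P (Set.Iio s)).toReal) := by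
  have hc : P (Set.Ici s) = 1 - P (Set.Iio s) := by
    rw [← compl_Iio]
    rw [measure_compl measurableSet_Iio (measure_ne_top _ _), measure_univ]
  rw [hc, ENNReal.ofReal_sub _ ENNReal.toReal_nonneg, ENNReal.ofReal_one,
    ENNReal.ofReal_toReal (measure_ne_top _ _)]

lemma surv_lower (s t : ℝ) :
    min (P (Set.Ici s)) (Q (Set.Ici t))
      ≤ (volume.restrict (Set.Ioo (0:ℝ) 1)) {x : ℝ | s ≤ CLB.qf P x ∧ t ≤ CLB.qf Q x} := by
  set a := (P (Set.Iio s)).toReal with ha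
  set b := (Q (Set.Iio t)).toReal with hb
  have ha0 : 0 ≤ a := ENNReal.toReal_nonneg
  have hb0 : 0 ≤ b := ENNReal.toReal_nonneg
  have hsub : Set.Ioo (max a b) 1 ⊆ {x : ℝ | s ≤ CLB.qf P x ∧ t ≤ CLB.qf Q x} := by
    intro x hx
    have hx0 : 0 < x := lt_of_le_of_lt (le_max_left a b |>.trans' ha0) hx.1
    have hxIoo : x ∈ Set.Ioo (0:ℝ) 1 := ⟨hx0, hx.2⟩
    have h1 : s ≤ quantileFn P x :=
      CLB.le_quantile hx.2 (by rw [← ha]; exact lt_of_le_of_lt (le_max_left a b) hx.1)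
    have h2 : t ≤ quantileFn Q x :=
      CLB.le_quantile hx.2 (by rw [← hb]; exact lt_of_le_of_lt (le_max_right a b) hx.1)
    constructor <;> rw [CLB.qf, if_pos hxIoo]
    exacts [h1, h2]
  calc min (P (Set.Ici s)) (Q (Set.Ici t))
      = min (ENNReal.ofReal (1 - a)) (ENNReal.ofReal (1 - b)) := by
        rw [ici_eq P s, ici_eq Q t]
    _ = ENNReal.ofReal (1 - max a b) := by
        rcases le_total a b with h | h
        · rw [max_eq_right h, min_eq_right (ENNReal.ofReal_le_ofReal (by linarith))]
        · rw [max_eq_left h, min_eq_left (ENNReal.ofReal_le_ofReal (by linarith))]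
    _ = (volume.restrict (Set.Ioo (0:ℝ) 1)) (Set.Ioo (max a b) 1) := by
        rw [Measure.restrict_apply measurableSet_Ioo]
        have : Set.Ioo (max a b) 1 ∩ Set.Ioo (0:ℝ) 1 = Set.Ioo (max a b) 1 := by
          rw [Set.inter_eq_left]
          intro x hx
          exact ⟨lt_of_le_of_lt (le_max_left a b |>.trans' ha0) hx.1, hx.2⟩
        rw [this, Real.volume_Ioo]
    _ ≤ _ := measure_mono hsub

end CLB4


/-- let `P`, `Q` be Borel probability measures on `ℝ` and let
`ψ̃ : ℝ × ℝ → [0,∞)` be continuous and quasi-antitone (submodular). Then for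
every probability measure `π` on `ℝ × ℝ` with first marginal `P` and second
marginal `Q`,
`∫ ψ̃ dπ ≥ ∫_{(0,1)} ψ̃(F_P^←(x), F_Q^←(x)) dλ_L(x)`. -/
theorem coupling_lower_bound (P Q : Measure ℝ)
    [IsProbabilityMeasure P] [IsProbabilityMeasure Q]
    (ψ : ℝ → ℝ → ℝ) (hψ0 : ∀ u v, 0 ≤ ψ u v)
    (hψc : Continuous (fun p : ℝ × ℝ => ψ p.1 p.2))
    (hψqa : ∀ u₁ u₂ v₁ v₂ : ℝ, u₁ ≤ u₂ → v₁ ≤ v₂ →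
      ψ u₁ v₁ + ψ u₂ v₂ ≤ ψ u₂ v₁ + ψ u₁ v₂)
    (π : Measure (ℝ × ℝ)) [IsProbabilityMeasure π]
    (hπ1 : π.map Prod.fst = P) (hπ2 : π.map Prod.snd = Q) :
    ∫⁻ x in Set.Ioo (0:ℝ) 1, ENNReal.ofReal (ψ (quantileFn P x) (quantileFn Q x))
      ≤ ∫⁻ p, ENNReal.ofReal (ψ p.1 p.2) ∂π := by
  have hmeasP : Measurable (CLB.qf P) := CLB.measurable_qf
  have hmeasQ : Measurable (CLB.qf Q) := CLB.measurable_qf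
  have hpairmeas : Measurable (fun x => (CLB.qf P x, CLB.qf Q x)) := hmeasP.prodMk hmeasQ
  have hae : (fun x => ENNReal.ofReal (ψ (quantileFn P x) (quantileFn Q x)))
      =ᵐ[volume.restrict (Set.Ioo (0:ℝ) 1)]
      (fun x => ENNReal.ofReal (ψ (CLB.qf P x) (CLB.qf Q x))) := by
    rw [Filter.EventuallyEq, ae_restrict_iff' measurableSet_Ioo]
    exact ae_of_all _ (fun x hx => by rw [CLB.qf_eq hx, CLB.qf_eq hx])
  rw [lintegral_congr_ae hae]
  have hsup : ∀ x : ℝ, ENNReal.ofReal (ψ (CLB.qf P x) (CLB.qf Q x))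
      = ⨆ N : ℕ, ENNReal.ofReal (INF.phi ψ N (CLB.qf P x) (CLB.qf Q x)) :=
    fun x => (INF.phi_sup hψ0 hψc _ _).symm
  rw [lintegral_congr hsup]
  rw [lintegral_iSup
    (f := fun N x => ENNReal.ofReal (INF.phi ψ N (CLB.qf P x) (CLB.qf Q x)))
    (fun N => ((INF.phi_cont hψ0 N).measurable.comp hpairmeas).ennreal_ofReal)
    (fun N M h x => ENNReal.ofReal_le_ofReal (INF.phi_mono_N hψ0 h _ _))]
  apply iSup_le
  intro N
  set ρ := Measure.map (fun x => (CLB.qf P x, CLB.qf Q x))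
    (volume.restrict (Set.Ioo (0:ℝ) 1)) with hρdef
  haveI : IsProbabilityMeasure ρ := Measure.isProbabilityMeasure_map hpairmeas.aemeasurable
  have hρ1 : ρ.map Prod.fst = P := by
    rw [hρdef, Measure.map_map measurable_fst hpairmeas]
    exact CLB.map_qf
  have hρ2 : ρ.map Prod.snd = Q := by
    rw [hρdef, Measure.map_map measurable_snd hpairmeas]
    exact CLB.map_qf
  have hsurv : ∀ s t : ℝ, π {p : ℝ × ℝ | s ≤ p.1 ∧ t ≤ p.2}
      ≤ ρ {p : ℝ × ℝ | s ≤ p.1 ∧ t ≤ p.2} := by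
    intro s t
    have hsetm : MeasurableSet {p : ℝ × ℝ | s ≤ p.1 ∧ t ≤ p.2} :=
      (measurableSet_le measurable_const measurable_fst).inter
        (measurableSet_le measurable_const measurable_snd)
    have hπs : π {p : ℝ × ℝ | s ≤ p.1 ∧ t ≤ p.2} ≤ min (P (Set.Ici s)) (Q (Set.Ici t)) := by
      apply le_min
      · calc π {p : ℝ × ℝ | s ≤ p.1 ∧ t ≤ p.2} ≤ π (Prod.fst ⁻¹' (Set.Ici s)) :=
            measure_mono (fun p hp => hp.1)
          _ = P (Set.Ici s) := by
            rw [← hπ1, Measure.map_apply measurable_fst measurableSet_Ici]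
      · calc π {p : ℝ × ℝ | s ≤ p.1 ∧ t ≤ p.2} ≤ π (Prod.snd ⁻¹' (Set.Ici t)) :=
            measure_mono (fun p hp => hp.2)
          _ = Q (Set.Ici t) := by
            rw [← hπ2, Measure.map_apply measurable_snd measurableSet_Ici]
    have hρs : ρ {p : ℝ × ℝ | s ≤ p.1 ∧ t ≤ p.2}
        = (volume.restrict (Set.Ioo (0:ℝ) 1)) {x : ℝ | s ≤ CLB.qf P x ∧ t ≤ CLB.qf Q x} := by
      rw [hρdef, Measure.map_apply hpairmeas hsetm]
      rfl
    rw [hρs]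
    exact hπs.trans (CLB4.surv_lower P Q s t)
  have hcore := Core.core P Q (INF.phi ψ N) (N : ℝ) (Nat.cast_nonneg N)
    (fun u v => INF.phi_nonneg hψ0 N u v)
    (fun u₁ u₂ v₁ v₂ h1 h2 => INF.phi_qa hψ0 hψqa N h1 h2)
    (INF.phi_cont hψ0 N)
    (fun u v u' v' => by simpa [INF.dd] using INF.phi_lip hψ0 N u v u' v')
    π ρ hπ1 hπ2 hρ1 hρ2 hsurv
  have hmapL : ∫⁻ x, ENNReal.ofReal (INF.phi ψ N (CLB.qf P x) (CLB.qf Q x))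
        ∂(volume.restrict (Set.Ioo (0:ℝ) 1))
      = ∫⁻ p, ENNReal.ofReal (INF.phi ψ N p.1 p.2) ∂ρ := by
    rw [hρdef, lintegral_map ((INF.phi_cont hψ0 N).measurable).ennreal_ofReal hpairmeas]
  rw [hmapL]
  exact hcore.trans (lintegral_mono
    (fun p => ENNReal.ofReal_le_ofReal (INF.phi_le hψ0 N p.1 p.2)))
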